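/- Let C be the associative conformal algebra which is the free k[T]-module on W = k[x] ⊕ kw with λ-products u_λ w = 0 for u ∈ W, f(x)_λ g(x) = f(x−T−λ)g(x), and w_λ f(x) = f(T)w for f,g ∈ k[x]. Then C cannot be embedded into any associative conformal algebra C_e possessing a conformal unit e (an element with (e_λ x)|_{λ=0} = x for all x and e_λ e = e). -/

import Mathlib

/-- Substitution `ν ↦ λ + μ` (outer index = power of μ, inner = power of λ). -/
noncomputable def substAdd {M : Type*} [AddCommMonoid M] (y : ℕ →₀ M) :
    ℕ →₀ (ℕ →₀ M) :=
  y.sum fun t c =>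
    (Finset.range (t + 1)).sum fun i =>
      Finsupp.single (t - i) (Finsupp.single i ((t.choose i) • c))

/-- Multiplication by `λ^s` on a two-variable polynomial. -/
noncomputable def innerShift {M : Type*} [AddCommMonoid M] (s : ℕ)
    (z : ℕ →₀ (ℕ →₀ M)) : ℕ →₀ (ℕ →₀ M) :=
  z.sum fun n f => Finsupp.single n (Finsupp.mapDomain (· + s) f)

section Cex

variable (k : Type*) [Field k] [CharZero k]

/-- The space of generators `W = k[x] ⊕ kw`: the first component is `f(x)`,
the second is the coefficient of `w`. -/
abbrev Wgen := Polynomial k × k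

/-- The counterexample conformal algebra `C`: the free `k[T]`-module on
`W = k[x] ⊕ kw`, encoded as `ℕ →₀ W` (the index is the power of `T`). -/
abbrev Cex := ℕ →₀ Wgen k

/-- The action of `T` on `C` (the index shift). -/
noncomputable def Tex : Module.End k (Cex k) :=
  Finsupp.lmapDomain (Wgen k) k (· + 1)

/-- The λ-product of generators:
`f(x)_λ g(x) = f(x − T − λ) g(x)`, `w_λ f(x) = f(T) w`, `u_λ w = 0`.
The result is a λ-polynomial with coefficients in `C` (outer index =
power of λ, then power of `T`, then an element of `W`).  For the first
formula we expand `(x − T − λ)^j = Σ_{p+q+r=j} j!/(p!q!r!) x^p (−T)^q (−λ)^r`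
using `j!/(p!q!r!) = C(j,r)·C(j−r,q)`. -/
noncomputable def genProd (u v : Wgen k) : ℕ →₀ Cex k :=
  ((Finset.range (u.1.natDegree + 1)).sum fun j =>
    (Finset.range (j + 1)).sum fun r' =>
      (Finset.range (j - r' + 1)).sum fun q =>
        Finsupp.single r'
          (Finsupp.single q
            ((u.1.coeff j * (j.choose r' : k) * ((j - r').choose q : k) *
                (-1 : k) ^ (q + r')) •
              ((Polynomial.X : Polynomial k) ^ (j - r' - q) * v.1, (0 : k)))))
  + (Finset.range (v.1.natDegree + 1)).sum fun n =>
      Finsupp.single 0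
        (Finsupp.single n ((0 : Polynomial k), u.2 * v.1.coeff n))

/-- The λ-product on `C`, extended from generators by sesquilinearity:
`(T^m u)_λ (T^n v) = (−λ)^m (T+λ)^n (u_λ v)`. -/
noncomputable def prodEx (y z : Cex k) : ℕ →₀ Cex k :=
  y.sum fun m u => z.sum fun n v =>
    (Finset.range (n + 1)).sum fun i =>
      Finsupp.mapDomain (· + (m + i))
        ((genProd k u v).sum fun p c =>
          Finsupp.single p
            ((((-1 : k) ^ m) * (n.choose i : k)) • ((Tex k) ^ (n - i)) c))

end Cex

section Helpers
variable {Ce : Type*} [AddCommGroup Ce]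

/-- Evaluation at `μ = -λ`: `z(λ,μ) ↦ Σ_m (-1)^m λ^m z_m(λ)`. -/
noncomputable def evalE (z : ℕ →₀ (ℕ →₀ Ce)) : ℕ →₀ Ce :=
  z.sum fun m f => (-1 : ℤ) ^ m • Finsupp.mapDomain (· + m) f

lemma evalE_add (a b : ℕ →₀ (ℕ →₀ Ce)) : evalE (a + b) = evalE a + evalE b :=
  Finsupp.sum_add_index' (fun m => by simp) (fun m f g => by
    rw [Finsupp.mapDomain_add, smul_add])

lemma evalE_single (m : ℕ) (f : ℕ →₀ Ce) :
    evalE (Finsupp.single m f) = (-1 : ℤ) ^ m • Finsupp.mapDomain (· + m) f :=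
  Finsupp.sum_single_index (by simp)

lemma innerShift_single (s m : ℕ) (f : ℕ →₀ Ce) :
    innerShift s (Finsupp.single m f) =
      Finsupp.single m (Finsupp.mapDomain (· + s) f) :=
  Finsupp.sum_single_index (by simp)

lemma innerShift_add (s : ℕ) (a b : ℕ →₀ (ℕ →₀ Ce)) :
    innerShift s (a + b) = innerShift s a + innerShift s b :=
  Finsupp.sum_add_index' (fun m => by simp) (fun m f g => by
    rw [Finsupp.mapDomain_add, Finsupp.single_add])

lemma substAdd_add (a b : ℕ →₀ Ce) : substAdd (a + b) = substAdd a + substAdd b :=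
  Finsupp.sum_add_index' (fun t => by simp) (fun t c c' => by
    rw [← Finset.sum_add_distrib]
    refine Finset.sum_congr rfl fun i _ => ?_
    rw [smul_add, Finsupp.single_add, Finsupp.single_add])

lemma substAdd_single (t : ℕ) (c : Ce) :
    substAdd (Finsupp.single t c) =
      (Finset.range (t + 1)).sum fun i =>
        Finsupp.single (t - i) (Finsupp.single i ((t.choose i) • c)) :=
  Finsupp.sum_single_index (by simp)

lemma evalE_sum {α : Type*} (A : Finset α) (g : α → ℕ →₀ (ℕ →₀ Ce)) :
    evalE (A.sum g) = A.sum fun a => evalE (g a) :=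
  map_sum (AddMonoidHom.mk' (M := ℕ →₀ (ℕ →₀ Ce)) evalE evalE_add) g A

lemma innerShift_sum {α : Type*} (s : ℕ) (A : Finset α) (g : α → ℕ →₀ (ℕ →₀ Ce)) :
    innerShift s (A.sum g) = A.sum fun a => innerShift s (g a) :=
  map_sum (AddMonoidHom.mk' (M := ℕ →₀ (ℕ →₀ Ce)) (innerShift s) (innerShift_add s)) g A

lemma alt_sum (t : ℕ) :
    (∑ i ∈ Finset.range (t + 1), (-1 : ℤ) ^ (t - i) * (t.choose i : ℤ)) =
      if t = 0 then 1 else 0 := by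
  rw [← Finset.sum_range_reflect, ← Int.alternating_sum_range_choose]
  refine Finset.sum_congr rfl fun j hj => ?_
  have hj' : j ≤ t := by
    have := Finset.mem_range.mp hj; omega
  have h1 : t + 1 - 1 - j = t - j := by omega
  have h2 : t - (t - j) = j := by omega
  rw [h1, h2, Nat.choose_symm hj']

lemma key_single (s t : ℕ) (c : Ce) :
    evalE (innerShift s (substAdd (Finsupp.single t c))) =
      Finsupp.single s ((Finsupp.single t c : ℕ →₀ Ce) 0) := by
  rw [substAdd_single, innerShift_sum, evalE_sum]
  have hformula : ∀ i ∈ Finset.range (t + 1),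
      evalE (innerShift s (Finsupp.single (t - i) (Finsupp.single i ((t.choose i) • c)))) =
        Finsupp.single (t + s) (((-1 : ℤ) ^ (t - i) * (t.choose i : ℤ)) • c) := by
    intro i hi
    have hi' : i ≤ t := by have := Finset.mem_range.mp hi; omega
    rw [innerShift_single, Finsupp.mapDomain_single, evalE_single,
      Finsupp.mapDomain_single]
    have h1 : i + s + (t - i) = t + s := by omega
    rw [h1, Finsupp.smul_single]
    congr 1
    rw [← Nat.cast_smul_eq_nsmul ℤ, smul_smul]
  rw [Finset.sum_congr rfl hformula]
  have hsum : (∑ i ∈ Finset.range (t + 1),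
      Finsupp.single (t + s) (((-1 : ℤ) ^ (t - i) * (t.choose i : ℤ)) • c)) =
      Finsupp.single (t + s)
        (∑ i ∈ Finset.range (t + 1), ((-1 : ℤ) ^ (t - i) * (t.choose i : ℤ)) • c) :=
    (map_sum (Finsupp.singleAddHom (t + s)) _ (Finset.range (t + 1))).symm
  rw [hsum, ← Finset.sum_smul, alt_sum]
  rcases eq_or_ne t 0 with h | h
  · subst h; simp
  · simp [h, Finsupp.single_apply, Ne.symm h]

lemma key (s : ℕ) (Q : ℕ →₀ Ce) :
    evalE (innerShift s (substAdd Q)) = Finsupp.single s (Q 0) := by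
  induction Q using Finsupp.induction with
  | zero => simp [substAdd, innerShift, evalE]
  | single_add t c Q ht hc ih =>
    rw [substAdd_add, innerShift_add, evalE_add, ih, key_single,
      ← Finsupp.single_add, ← Finsupp.add_apply]
end Helpers

section CompLemmas
variable (k : Type*) [Field k] [CharZero k]

lemma genProd_w_x :
    genProd k ((0 : Polynomial k), (1 : k)) ((Polynomial.X : Polynomial k), (0 : k)) =
      Finsupp.single 0 (Finsupp.single 1 ((0 : Polynomial k), (1 : k))) := by
  unfold genProd
  simp [Finset.sum_range_succ, Prod.smul_mk]

lemma genProd_zero_left (v : Wgen k) : genProd k 0 v = 0 := by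
  unfold genProd
  simp
  exact Finset.sum_eq_zero fun _ _ => by
    rw [show ((0 : Polynomial k), (0 : k)) = 0 from rfl, Finsupp.single_zero, Finsupp.single_zero]

lemma prodEx_w_x :
    prodEx k (Finsupp.single 0 ((0 : Polynomial k), (1 : k)))
        (Finsupp.single 0 ((Polynomial.X : Polynomial k), (0 : k))) =
      Finsupp.single 0 (Finsupp.single 1 ((0 : Polynomial k), (1 : k))) := by
  unfold prodEx
  rw [Finsupp.sum_single_index (by simp [genProd_zero_left])]
  rw [Finsupp.sum_single_index (by simp [genProd])]
  rw [genProd_w_x]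
  rw [Finset.sum_range_one]
  rw [Finsupp.sum_single_index (by simp)]
  simp
end CompLemmas


/-- the associative conformal algebra `C` — the free
`k[T]`-module on `W = k[x] ⊕ kw` with `u_λ w = 0`,
`f(x)_λ g(x) = f(x−T−λ) g(x)`, `w_λ f(x) = f(T) w` — cannot be embedded into
any associative conformal algebra `C_e` possessing a conformal unit `e`
(i.e. `(e_λ x)|_{λ=0} = x` for all `x` and `e_λ e = e`).  Conformal algebras
are given in the coefficient encoding (`C_e[λ] = ℕ →₀ C_e`), an embedding is
an injective `k`-linear map commuting with `T` and with the λ-products. -/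
theorem stmt17 {k : Type*} [Field k] [CharZero k]
    {Ce : Type*} [AddCommGroup Ce] [Module k Ce]
    (Te : Module.End k Ce)
    (prodE : Ce →ₗ[k] Ce →ₗ[k] (ℕ →₀ Ce))
    -- (Ta)_λ b = −λ (a_λ b)
    (hs1 : ∀ a b : Ce, prodE (Te a) b = - Finsupp.mapDomain (· + 1) (prodE a b))
    -- a_λ (Tb) = (T + λ)(a_λ b)
    (hs2 : ∀ a b : Ce,
      prodE a (Te b) =
        ((prodE a b).sum fun n x => Finsupp.single n (Te x)) +
          Finsupp.mapDomain (· + 1) (prodE a b))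
    -- (a_λ (b_μ c)) = ((a_λ b)_{λ+μ} c)
    (hassoc : ∀ a b c : Ce,
      ((prodE b c).sum fun n x => Finsupp.single n (prodE a x)) =
        (prodE a b).sum fun s x => innerShift s (substAdd (prodE x c)))
    -- a conformal unit
    (e : Ce)
    (hu1 : ∀ x : Ce, (prodE e x) 0 = x)
    (hu2 : prodE e e = Finsupp.single 0 e)
    -- an embedding of C into C_e
    (φ : Cex k →ₗ[k] Ce)
    (hφT : ∀ y : Cex k, φ (Tex k y) = Te (φ y))
    (hφp : ∀ y z : Cex k,
      prodE (φ y) (φ z) = (prodEx k y z).sum fun n x => Finsupp.single n (φ x)) :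
    ¬ Function.Injective φ := by
  intro hinj
  classical
  set wc : Cex k := Finsupp.single 0 ((0 : Polynomial k), (1 : k)) with hwcdef
  set xc : Cex k := Finsupp.single 0 ((Polynomial.X : Polynomial k), (0 : k)) with hxcdef
  have hφw : φ wc ≠ 0 := by
    intro h
    have h0 : wc = 0 := hinj (by rw [h, map_zero])
    rw [hwcdef, Finsupp.single_eq_zero, Prod.mk_eq_zero] at h0
    exact one_ne_zero h0.2
  set P : ℕ →₀ Ce := prodE e (φ wc) with hPdef
  have hP0 : P 0 = φ wc := hu1 _
  have hne : P.support.Nonempty := ⟨0, Finsupp.mem_support_iff.mpr (by rw [hP0]; exact hφw)⟩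
  set d := P.support.max' hne with hddef
  have hdmem : d ∈ P.support := P.support.max'_mem hne
  have hdle : ∀ s ∈ P.support, s ≤ d := fun s hs => Finset.le_max' _ s hs
  -- Step 1: `(φ w)_λ (φ x) = T(φ w)` (constant in λ)
  have hTexW : Tex k wc = Finsupp.single 1 ((0 : Polynomial k), (1 : k)) := by
    rw [hwcdef]
    simp [Tex, Finsupp.lmapDomain_apply, Finsupp.mapDomain_single]
  have h1 : prodE (φ wc) (φ xc) = Finsupp.single 0 (Te (φ wc)) := by
    rw [hφp, prodEx_w_x, Finsupp.sum_single_index (by simp), ← hTexW, hφT]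
  -- Step 2: associativity `e_λ ((φw)_μ (φx)) = ((e_λ φw)_{λ+μ} (φx))`
  have h2 := hassoc e (φ wc) (φ xc)
  rw [h1, Finsupp.sum_single_index (by simp), hs2] at h2
  -- Step 3: evaluate at `μ = -λ` and take the coefficient of `λ^{d+1}`
  have h3 := congrArg (fun z => evalE z (d + 1)) h2
  have hid : ((· + 0) : ℕ → ℕ) = id := funext fun n => add_zero n
  rw [evalE_single, pow_zero, one_smul, hid, Finsupp.mapDomain_id] at h3
  -- LHS is `P d`
  rw [← hPdef] at h3
  have hA : (((P.sum fun n x => Finsupp.single n (Te x)) +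
      Finsupp.mapDomain (· + 1) P : ℕ →₀ Ce)) (d + 1) = P d := by
    rw [Finsupp.add_apply, Finsupp.sum_apply]
    have hz : (P.sum fun n x => (Finsupp.single n (Te x) : ℕ →₀ Ce) (d + 1)) = 0 := by
      refine Finset.sum_eq_zero fun n hn => ?_
      have : n ≠ d + 1 := by have := hdle n hn; omega
      exact Finsupp.single_eq_of_ne this.symm
    rw [hz, zero_add]
    exact Finsupp.mapDomain_apply (add_left_injective 1) P d
  rw [hA] at h3
  -- RHS is `0`
  have hB : evalE (P.sum fun s x => innerShift s (substAdd (prodE x (φ xc)))) (d + 1) = 0 := by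
    rw [Finsupp.sum, evalE_sum, Finsupp.finset_sum_apply]
    refine Finset.sum_eq_zero fun s hs => ?_
    rw [key]
    have : s ≠ d + 1 := by have := hdle s hs; omega
    exact Finsupp.single_eq_of_ne this.symm
  rw [hB] at h3
  exact Finsupp.mem_support_iff.mp hdmem h3
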